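/- The binomial coefficient polynomial C(x,k) = x(x−1)⋯(x−k+1)/k! is irreducible in the ring Int(ℤ) of integer-valued polynomials, for every k ≥ 1. -/

import Mathlib

open Polynomial

lemma diff_coeff (f : ℚ[X]) (d : ℕ) (hd : f.natDegree ≤ d + 1) :
    ((taylor 1 f : ℚ[X]) - f).coeff d = (d + 1 : ℚ) * f.coeff (d + 1) := by
  have h1 : ((taylor (1:ℚ)) f).coeff d = (hasseDeriv d f).eval 1 :=
    Polynomial.taylor_coeff (r := (1:ℚ)) (f := f) d
  have hdeg : (hasseDeriv d f).natDegree < 2 := by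
    have := natDegree_hasseDeriv_le f d
    omega
  have h2 : (hasseDeriv d f).eval 1 =
      ∑ i ∈ Finset.range 2, (hasseDeriv d f).coeff i * 1 ^ i :=
    eval_eq_sum_range' hdeg 1
  simp only [Finset.sum_range_succ, Finset.range_one, Finset.sum_singleton] at h2
  rw [hasseDeriv_coeff, hasseDeriv_coeff] at h2
  simp only [Nat.choose_self, Nat.cast_one, one_mul, one_pow, mul_one, zero_add] at h2
  have h3 : (1 + d).choose d = d + 1 := by
    rw [Nat.add_comm, Nat.choose_succ_self_right]
  rw [coeff_sub, h1, h2, h3, Nat.add_comm 1 d]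
  push_cast
  ring

lemma diff_natDegree (f : ℚ[X]) (d : ℕ) (hd : f.natDegree ≤ d + 1) :
    ((taylor 1 f : ℚ[X]) - f).natDegree ≤ d := by
  rw [natDegree_le_iff_coeff_eq_zero]
  intro m hm
  rw [coeff_sub, Polynomial.taylor_coeff]
  have hdeg : (hasseDeriv m f).natDegree < 1 := by
    have h1 := natDegree_hasseDeriv_le f m
    by_cases hz : hasseDeriv m f = 0
    · rw [hz]; simp
    · by_cases hm1 : m ≤ d + 1
      · omega
      · exfalso
        apply hz
        ext n
        rw [hasseDeriv_coeff, coeff_eq_zero_of_natDegree_lt (by omega), coeff_zero, mul_zero]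
  have h2 : (hasseDeriv m f).eval 1 =
      ∑ i ∈ Finset.range 1, (hasseDeriv m f).coeff i * 1 ^ i :=
    eval_eq_sum_range' hdeg 1
  simp only [Finset.range_one, Finset.sum_singleton, pow_zero, mul_one] at h2
  rw [h2, hasseDeriv_coeff]
  simp only [Nat.choose_self, Nat.cast_one, one_mul, zero_add]
  exact sub_self _

lemma intValued_factorial_coeff :
    ∀ (d : ℕ) (f : ℚ[X]), (∀ n : ℤ, ∃ m : ℤ, f.eval (n : ℚ) = (m : ℚ)) →
      f.natDegree ≤ d → ∃ m : ℤ, (d.factorial : ℚ) * f.coeff d = (m : ℚ) := by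
  intro d
  induction d with
  | zero =>
    intro f hf hd
    obtain ⟨m, hm⟩ := hf 0
    exact ⟨m, by simpa [coeff_zero_eq_eval_zero] using hm⟩
  | succ d ih =>
    intro f hf hd
    set g : ℚ[X] := (taylor 1 f : ℚ[X]) - f with hg
    have hgmem : ∀ n : ℤ, ∃ m : ℤ, g.eval (n : ℚ) = (m : ℚ) := by
      intro n
      obtain ⟨a, ha⟩ := hf (n + 1)
      obtain ⟨b, hb⟩ := hf n
      refine ⟨a - b, ?_⟩
      rw [hg, eval_sub, taylor_eval, hb]
      push_cast at ha ⊢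
      rw [ha]
    obtain ⟨m, hm⟩ := ih g hgmem (diff_natDegree f d hd)
    refine ⟨m, ?_⟩
    rw [diff_coeff f d hd] at hm
    rw [Nat.factorial_succ]
    push_cast at hm ⊢
    rw [← hm]
    ring

/-- The ring of integer-valued polynomials Int(ℤ) ⊆ ℚ[x]. -/
noncomputable def IntValued : Subring (Polynomial ℚ) where
  carrier := {f | ∀ n : ℤ, ∃ m : ℤ, f.eval (n : ℚ) = (m : ℚ)}
  zero_mem' := fun n => ⟨0, by simp⟩
  one_mem' := fun n => ⟨1, by simp⟩
  add_mem' := by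
    intro f g hf hg n
    obtain ⟨a, ha⟩ := hf n
    obtain ⟨b, hb⟩ := hg n
    exact ⟨a + b, by push_cast; rw [eval_add, ha, hb]⟩
  mul_mem' := by
    intro f g hf hg n
    obtain ⟨a, ha⟩ := hf n
    obtain ⟨b, hb⟩ := hg n
    exact ⟨a * b, by push_cast; rw [eval_mul, ha, hb]⟩
  neg_mem' := by
    intro f hf n
    obtain ⟨a, ha⟩ := hf n
    exact ⟨-a, by push_cast; rw [eval_neg, ha]⟩

/-- The binomial coefficient polynomial C(x,k) = x(x−1)⋯(x−k+1)/k!. -/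
noncomputable def binomPoly (k : ℕ) : Polynomial ℚ :=
  C ((k.factorial : ℚ))⁻¹ * ∏ i ∈ Finset.range k, (X - C (i : ℚ))

lemma binomPoly_natDegree (k : ℕ) : (binomPoly k).natDegree = k := by
  rw [binomPoly, natDegree_C_mul (by positivity : ((k.factorial : ℚ))⁻¹ ≠ 0)]
  rw [natDegree_prod _ _ (fun i _ => X_sub_C_ne_zero _)]
  simp only [natDegree_X_sub_C]
  simp

lemma binomPoly_leadingCoeff (k : ℕ) : (binomPoly k).leadingCoeff = ((k.factorial : ℚ))⁻¹ := by
  rw [binomPoly, leadingCoeff_mul, leadingCoeff_C]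
  rw [(monic_prod_of_monic _ _ (fun i _ => monic_X_sub_C _)).leadingCoeff, mul_one]

lemma binomPoly_ne_zero (k : ℕ) : binomPoly k ≠ 0 := by
  intro h
  have := binomPoly_leadingCoeff k
  rw [h, leadingCoeff_zero] at this
  exact (by positivity : ((k.factorial : ℚ))⁻¹ ≠ 0) this.symm

lemma binomPoly_eval_self (k : ℕ) : (binomPoly k).eval (k : ℚ) = 1 := by
  rw [binomPoly, eval_mul, eval_C, eval_prod]
  have h : ∀ i ∈ Finset.range k, eval (k : ℚ) (X - C (i : ℚ)) = ((k - i : ℕ) : ℚ) := by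
    intro i hi
    rw [Finset.mem_range] at hi
    rw [eval_sub, eval_X, eval_C, Nat.cast_sub hi.le]
  rw [Finset.prod_congr rfl h, ← Nat.cast_prod]
  have hp : ∏ i ∈ Finset.range k, (k - i) = k.factorial := by
    calc ∏ i ∈ Finset.range k, (k - i)
        = ∏ i ∈ Finset.range k, (k - 1 - i + 1) := by
          refine Finset.prod_congr rfl fun i hi => ?_
          rw [Finset.mem_range] at hi; omega
      _ = ∏ i ∈ Finset.range k, (i + 1) := Finset.prod_range_reflect (fun j => j + 1) k
      _ = k.factorial := by
          rw [Finset.prod_range_add_one_eq_factorial]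
  rw [hp, inv_mul_cancel₀ (by positivity : ((k.factorial : ℚ)) ≠ 0)]

lemma one_lt_choose' {k d : ℕ} (h0 : 0 < d) (hk : d < k) : 1 < k.choose d := by
  obtain ⟨d', rfl⟩ := Nat.exists_eq_succ_of_ne_zero h0.ne'
  obtain ⟨k', rfl⟩ := Nat.exists_eq_succ_of_ne_zero (by omega : k ≠ 0)
  rw [Nat.choose_succ_succ]
  have h1 : 0 < k'.choose d' := Nat.choose_pos (by omega)
  have h2 : 0 < k'.choose d'.succ := Nat.choose_pos (by omega)
  omega

/-- If `f * g = binomPoly k` with both integer-valued and `f` constant, then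
`f` is a unit element of `IntValued`. -/
lemma const_factor_isUnit (k : ℕ) (f g : ℚ[X]) (hf : f ∈ IntValued) (hg : g ∈ IntValued)
    (hfg : f * g = binomPoly k) (hd : f.natDegree = 0) :
    IsUnit (⟨f, hf⟩ : IntValued) := by
  have hfc : f = C (f.coeff 0) := (eq_C_of_natDegree_eq_zero hd)
  have hf' : ∀ n : ℤ, ∃ m : ℤ, f.eval (n : ℚ) = (m : ℚ) := hf
  have hg' : ∀ n : ℤ, ∃ m : ℤ, g.eval (n : ℚ) = (m : ℚ) := hg
  obtain ⟨a, ha⟩ := hf' 0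
  obtain ⟨b, hb⟩ := hg' k
  have hc : f.coeff 0 = (a : ℚ) := by rw [coeff_zero_eq_eval_zero]; exact_mod_cast ha
  have heval : f.eval (k : ℚ) * g.eval (k : ℚ) = 1 := by
    rw [← eval_mul, hfg, binomPoly_eval_self]
  have hfk : f.eval (k : ℚ) = (a : ℚ) := by
    conv_lhs => rw [hfc]
    rw [eval_C, hc]
  have hab : a * b = 1 := by
    have : ((a * b : ℤ) : ℚ) = 1 := by push_cast; rw [← hfk, ← hb]; exact heval
    exact_mod_cast this
  rcases Int.isUnit_iff.mp (IsUnit.of_mul_eq_one (a := a) b hab) with h1 | h1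
  · have : f = 1 := by rw [hfc, hc, h1]; push_cast; rw [map_one]
    rw [show (⟨f, hf⟩ : IntValued) = 1 from Subtype.ext this]
    exact isUnit_one
  · have : f = -1 := by rw [hfc, hc, h1]; push_cast; simp
    rw [show (⟨f, hf⟩ : IntValued) = -1 from Subtype.ext this]
    exact isUnit_one.neg

theorem binomPoly_irreducible (k : ℕ) (hk : 1 ≤ k) (hmem : binomPoly k ∈ IntValued) :
    Irreducible (⟨binomPoly k, hmem⟩ : IntValued) := by
  constructor
  · intro hu
    have : IsUnit (binomPoly k) := hu.map IntValued.subtype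
    have hdeg := natDegree_eq_zero_of_isUnit this
    rw [binomPoly_natDegree] at hdeg
    omega
  · rintro ⟨f, hf⟩ ⟨g, hg⟩ h
    have hfg : f * g = binomPoly k := (congrArg Subtype.val h).symm
    have hne : f ≠ 0 ∧ g ≠ 0 := by
      constructor <;> (rintro rfl; apply binomPoly_ne_zero k; rw [← hfg]; ring)
    set d := f.natDegree with hdd
    set e := g.natDegree with hee
    have hsum : d + e = k := by
      rw [hdd, hee, ← natDegree_mul hne.1 hne.2, hfg, binomPoly_natDegree]
    have hlc : f.leadingCoeff * g.leadingCoeff = ((k.factorial : ℚ))⁻¹ := by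
      rw [← leadingCoeff_mul, hfg, binomPoly_leadingCoeff]
    have hf' : ∀ n : ℤ, ∃ m : ℤ, f.eval (n : ℚ) = (m : ℚ) := hf
    have hg' : ∀ n : ℤ, ∃ m : ℤ, g.eval (n : ℚ) = (m : ℚ) := hg
    obtain ⟨a, ha⟩ := intValued_factorial_coeff d f hf' le_rfl
    obtain ⟨b, hb⟩ := intValued_factorial_coeff e g hg' le_rfl
    have hcast : ((a * b * (k.choose d) : ℤ) : ℚ) = 1 := by
      push_cast
      rw [← ha, ← hb]
      have hfac : ((k.choose d : ℚ)) * (d.factorial : ℚ) * (e.factorial : ℚ)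
          = (k.factorial : ℚ) := by
        have := Nat.choose_mul_factorial_mul_factorial (by omega : d ≤ k)
        rw [show k - d = e by omega] at this
        exact_mod_cast this
      have : f.leadingCoeff * g.leadingCoeff * (k.factorial : ℚ) = 1 := by
        rw [hlc, inv_mul_cancel₀ (by positivity)]
      calc (d.factorial : ℚ) * f.coeff d * ((e.factorial : ℚ) * g.coeff e) * (k.choose d : ℚ)
          = f.leadingCoeff * g.leadingCoeff *
            ((k.choose d : ℚ) * (d.factorial : ℚ) * (e.factorial : ℚ)) := by
            rw [leadingCoeff, leadingCoeff, ← hdd, ← hee]; ring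
        _ = 1 := by rw [hfac, this]
    have hint : a * b * (k.choose d : ℤ) = 1 := by exact_mod_cast hcast
    have hchoose : k.choose d = 1 := by
      have h1 : (k.choose d : ℤ) ∣ 1 := Dvd.intro_left _ hint
      have h2 := Int.le_of_dvd one_pos h1
      have h3 : k.choose d ≠ 0 := by
        intro hzero
        rw [hzero] at hint; simp at hint
      omega
    have hd0 : d = 0 ∨ d = k := by
      by_contra hcon
      push_neg at hcon
      have := one_lt_choose' (by omega) (by omega : d < k)
      omega
    rcases hd0 with hd0 | hd0
    · exact Or.inl (const_factor_isUnit k f g hf hg hfg hd0)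
    · refine Or.inr (const_factor_isUnit k g f hg hf ?_ (by omega))
      rw [← hfg]; ring
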